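/- If the group class distributions are mirrored, i.e. β = 1 − α with α ≤ 1/2, then the accuracy difference satisfies AD ≤ α·|TPR^(0) − TPR^(1)| + α·|TNR^(0) − TNR^(1)| + (1 − 2α)·|TPR^(1) − TNR^(0)|. -/

import Mathlib

open MeasureTheory

/-- Conditional probability `P(A | B)` as a real number. -/
noncomputable def condProb {Ω : Type*} [MeasurableSpace Ω] (P : Measure Ω) (A B : Set Ω) : ℝ :=
  (P (A ∩ B)).toReal / (P B).toReal

/-- Group true positive rate `TPR^(s') = P(h = 1 | s = s', y = 1)`. -/
noncomputable def groupTPR {Ω : Type*} [MeasurableSpace Ω] (P : Measure Ω)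
    (y s h : Ω → Bool) (s' : Bool) : ℝ :=
  condProb P {ω | h ω = true} {ω | s ω = s' ∧ y ω = true}

/-- Group true negative rate `TNR^(s') = P(h = 0 | s = s', y = 0)`. -/
noncomputable def groupTNR {Ω : Type*} [MeasurableSpace Ω] (P : Measure Ω)
    (y s h : Ω → Bool) (s' : Bool) : ℝ :=
  condProb P {ω | h ω = false} {ω | s ω = s' ∧ y ω = false}

/-- Group accuracy `Acc^(s') = P(h = y | s = s')`. -/
noncomputable def groupAcc {Ω : Type*} [MeasurableSpace Ω] (P : Measure Ω)
    (y s h : Ω → Bool) (s' : Bool) : ℝ :=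
  condProb P {ω | h ω = y ω} {ω | s ω = s'}

section Helpers
open Set

private lemma meas_sy {Ω : Type*} [MeasurableSpace Ω] {y s : Ω → Bool}
    (hy : Measurable y) (hs : Measurable s) (b k : Bool) :
    MeasurableSet {ω | s ω = b ∧ y ω = k} := by
  have h : {ω | s ω = b ∧ y ω = k} = s ⁻¹' {b} ∩ y ⁻¹' {k} := by
    ext ω; simp [Set.mem_preimage]
  rw [h]
  exact (hs (measurableSet_singleton b)).inter (hy (measurableSet_singleton k))

private lemma split_s {Ω : Type*} [MeasurableSpace Ω] (P : Measure Ω) [IsFiniteMeasure P]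
    {y s : Ω → Bool} (hy : Measurable y) (hs : Measurable s) (b : Bool) :
    (P {ω | s ω = b}).toReal =
      (P {ω | s ω = b ∧ y ω = true}).toReal + (P {ω | s ω = b ∧ y ω = false}).toReal := by
  have hset : {ω | s ω = b} =
      {ω | s ω = b ∧ y ω = true} ∪ {ω | s ω = b ∧ y ω = false} := by
    ext ω; cases hyy : y ω <;> simp [hyy]
  have hdis : Disjoint {ω | s ω = b ∧ y ω = true} {ω | s ω = b ∧ y ω = false} := by
    rw [Set.disjoint_left]; rintro ω ⟨_, h1⟩ ⟨_, h2⟩; simp [h1] at h2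
  rw [hset, measure_union hdis (meas_sy hy hs b false)]
  exact ENNReal.toReal_add (measure_ne_top P _) (measure_ne_top P _)

private lemma split_acc {Ω : Type*} [MeasurableSpace Ω] (P : Measure Ω) [IsFiniteMeasure P]
    {y s h : Ω → Bool} (hy : Measurable y) (hs : Measurable s) (hh : Measurable h) (b : Bool) :
    (P ({ω | h ω = y ω} ∩ {ω | s ω = b})).toReal =
      (P ({ω | h ω = true} ∩ {ω | s ω = b ∧ y ω = true})).toReal +
      (P ({ω | h ω = false} ∩ {ω | s ω = b ∧ y ω = false})).toReal := by
  have hset : {ω | h ω = y ω} ∩ {ω | s ω = b} =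
      ({ω | h ω = true} ∩ {ω | s ω = b ∧ y ω = true}) ∪
      ({ω | h ω = false} ∩ {ω | s ω = b ∧ y ω = false}) := by
    ext ω
    cases hyy : y ω <;> cases hhh : h ω <;> simp [hyy, hhh]
  have hdis : Disjoint ({ω | h ω = true} ∩ {ω | s ω = b ∧ y ω = true})
      ({ω | h ω = false} ∩ {ω | s ω = b ∧ y ω = false}) := by
    rw [Set.disjoint_left]; rintro ω ⟨h1, _⟩ ⟨h2, _⟩; simp_all
  rw [hset, measure_union hdis ((hh (measurableSet_singleton false)).inter (meas_sy hy hs b false))]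
  exact ENNReal.toReal_add (measure_ne_top P _) (measure_ne_top P _)

private lemma cond_y_eq {Ω : Type*} [MeasurableSpace Ω] (P : Measure Ω) [IsFiniteMeasure P]
    {y s : Ω → Bool} (hy : Measurable y) (hs : Measurable s) (b : Bool) :
    condProb P {ω | y ω = true} {ω | s ω = b} =
      (P {ω | s ω = b ∧ y ω = true}).toReal /
        ((P {ω | s ω = b ∧ y ω = true}).toReal + (P {ω | s ω = b ∧ y ω = false}).toReal) := by
  have hset : {ω | y ω = true} ∩ {ω | s ω = b} = {ω | s ω = b ∧ y ω = true} := by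
    ext ω; simp [and_comm]
  rw [condProb, hset, split_s P hy hs b]

private lemma acc_decomp {Ω : Type*} [MeasurableSpace Ω] (P : Measure Ω) [IsFiniteMeasure P]
    {y s h : Ω → Bool} (hy : Measurable y) (hs : Measurable s) (hh : Measurable h) (b : Bool)
    (h1 : 0 < P {ω | s ω = b ∧ y ω = true}) (h0 : 0 < P {ω | s ω = b ∧ y ω = false}) :
    groupAcc P y s h b =
      ((P {ω | s ω = b ∧ y ω = true}).toReal /
        ((P {ω | s ω = b ∧ y ω = true}).toReal + (P {ω | s ω = b ∧ y ω = false}).toReal)) *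
        groupTPR P y s h b +
      ((P {ω | s ω = b ∧ y ω = false}).toReal /
        ((P {ω | s ω = b ∧ y ω = true}).toReal + (P {ω | s ω = b ∧ y ω = false}).toReal)) *
        groupTNR P y s h b := by
  have hd1 : 0 < (P {ω | s ω = b ∧ y ω = true}).toReal :=
    ENNReal.toReal_pos h1.ne' (measure_ne_top P _)
  have hd0 : 0 < (P {ω | s ω = b ∧ y ω = false}).toReal :=
    ENNReal.toReal_pos h0.ne' (measure_ne_top P _)
  rw [groupAcc, groupTPR, groupTNR, condProb, condProb, condProb,
      split_s P hy hs b, split_acc P hy hs hh b]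
  field_simp

end Helpers

/-- if the group class distributions are mirrored (`β = 1 − α`, `α ≤ 1/2`), then
`AD ≤ α·|TPR⁰ − TPR¹| + α·|TNR⁰ − TNR¹| + (1 − 2α)·|TPR¹ − TNR⁰|`. -/
theorem accuracy_difference_bound_distribution_shift
    {Ω : Type*} [MeasurableSpace Ω] (P : Measure Ω) [IsProbabilityMeasure P]
    (y s h : Ω → Bool) (hy : Measurable y) (hs : Measurable s) (hh : Measurable h)
    (hpos : ∀ s' k : Bool, 0 < P {ω | s ω = s' ∧ y ω = k})
    (α β : ℝ)
    (hα : α = condProb P {ω | y ω = true} {ω | s ω = false})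
    (hβ : β = condProb P {ω | y ω = true} {ω | s ω = true})
    (hmirror : β = 1 - α) (hhalf : α ≤ 1 / 2) :
    |groupAcc P y s h false - groupAcc P y s h true| ≤
      α * |groupTPR P y s h false - groupTPR P y s h true| +
      α * |groupTNR P y s h false - groupTNR P y s h true| +
      (1 - 2 * α) * |groupTPR P y s h true - groupTNR P y s h false| := by
  have hd1f : 0 < (P {ω | s ω = false ∧ y ω = true}).toReal :=
    ENNReal.toReal_pos (hpos false true).ne' (measure_ne_top P _)
  have hd0f : 0 < (P {ω | s ω = false ∧ y ω = false}).toReal :=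
    ENNReal.toReal_pos (hpos false false).ne' (measure_ne_top P _)
  have hd1t : 0 < (P {ω | s ω = true ∧ y ω = true}).toReal :=
    ENNReal.toReal_pos (hpos true true).ne' (measure_ne_top P _)
  have hd0t : 0 < (P {ω | s ω = true ∧ y ω = false}).toReal :=
    ENNReal.toReal_pos (hpos true false).ne' (measure_ne_top P _)
  have hαv : α = (P {ω | s ω = false ∧ y ω = true}).toReal /
      ((P {ω | s ω = false ∧ y ω = true}).toReal + (P {ω | s ω = false ∧ y ω = false}).toReal) := by
    rw [hα, cond_y_eq P hy hs false]
  have hβv : β = (P {ω | s ω = true ∧ y ω = true}).toReal /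
      ((P {ω | s ω = true ∧ y ω = true}).toReal + (P {ω | s ω = true ∧ y ω = false}).toReal) := by
    rw [hβ, cond_y_eq P hy hs true]
  have h1mα : 1 - α = (P {ω | s ω = false ∧ y ω = false}).toReal /
      ((P {ω | s ω = false ∧ y ω = true}).toReal + (P {ω | s ω = false ∧ y ω = false}).toReal) := by
    rw [hαv]; field_simp; ring
  have h1mβ : 1 - β = (P {ω | s ω = true ∧ y ω = false}).toReal /
      ((P {ω | s ω = true ∧ y ω = true}).toReal + (P {ω | s ω = true ∧ y ω = false}).toReal) := by
    rw [hβv]; field_simp; ring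
  have hAccF : groupAcc P y s h false =
      α * groupTPR P y s h false + (1 - α) * groupTNR P y s h false := by
    rw [acc_decomp P hy hs hh false (hpos false true) (hpos false false), ← hαv, ← h1mα]
  have hAccT : groupAcc P y s h true =
      (1 - α) * groupTPR P y s h true + α * groupTNR P y s h true := by
    have h1 : β = 1 - α := hmirror
    have h2 : (1 : ℝ) - β = α := by linarith
    rw [acc_decomp P hy hs hh true (hpos true true) (hpos true false), ← hβv, ← h1mβ, h1]; ring
  have hα0 : 0 ≤ α := by
    rw [hαv]; positivity
  have hα2 : 0 ≤ 1 - 2 * α := by linarith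
  set T0 := groupTPR P y s h false
  set T1 := groupTPR P y s h true
  set N0 := groupTNR P y s h false
  set N1 := groupTNR P y s h true
  have hdiff : groupAcc P y s h false - groupAcc P y s h true =
      α * (T0 - T1) + α * (N0 - N1) + (1 - 2 * α) * (N0 - T1) := by
    rw [hAccF, hAccT]; ring
  rw [hdiff]
  calc |α * (T0 - T1) + α * (N0 - N1) + (1 - 2 * α) * (N0 - T1)|
      ≤ |α * (T0 - T1)| + |α * (N0 - N1)| + |(1 - 2 * α) * (N0 - T1)| := abs_add_three _ _ _
    _ = α * |T0 - T1| + α * |N0 - N1| + (1 - 2 * α) * |T1 - N0| := by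
        rw [abs_mul, abs_mul, abs_mul, abs_of_nonneg hα0, abs_of_nonneg hα2, abs_sub_comm N0 T1]
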